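/- Let V = ℤⁿ with the nearest-neighbor weights ω(x,y) = 1 iff |x−y| = 1, μ ≡ 2n, Laplacian Δf(x) = (1/(2n)) ∑_{|y−x|=1} (f(y) − f(x)), and let f(x) = |x| (Euclidean norm). Then there exists a constant C = C(n) such that |Δf(x)| ≤ C/|x| for all x ∈ ℤⁿ with |x| ≥ 1. -/

import Mathlib

/-- Euclidean norm of a lattice point. -/
noncomputable def latticeNorm {n : ℕ} (x : Fin n → ℤ) : ℝ :=
  Real.sqrt (∑ i, ((x i : ℝ)) ^ 2)

/-- The `i`-th standard basis vector of `ℤⁿ`. -/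
def latticeBasis {n : ℕ} (i : Fin n) : Fin n → ℤ := fun j => if j = i then 1 else 0

/-- Embedding of the lattice into Euclidean space. -/
noncomputable def toE {n : ℕ} (x : Fin n → ℤ) : EuclideanSpace ℝ (Fin n) :=
  WithLp.toLp 2 (fun i => (x i : ℝ))

lemma latticeNorm_eq {n : ℕ} (x : Fin n → ℤ) : latticeNorm x = ‖toE x‖ := by
  rw [EuclideanSpace.norm_eq, latticeNorm]
  congr 1
  refine Finset.sum_congr rfl fun i _ => ?_
  rw [toE]
  rw [Real.norm_eq_abs, sq_abs]

lemma toE_add {n : ℕ} (x y : Fin n → ℤ) : toE (x + y) = toE x + toE y := by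
  ext i
  simp [toE]

lemma toE_sub {n : ℕ} (x y : Fin n → ℤ) : toE (x - y) = toE x - toE y := by
  ext i
  simp [toE]

lemma norm_toE_basis {n : ℕ} (i : Fin n) : ‖toE (latticeBasis i)‖ = 1 := by
  rw [EuclideanSpace.norm_eq]
  have : ∑ j, ‖toE (latticeBasis i) j‖ ^ 2 = 1 := by
    simp [toE, latticeBasis, Finset.sum_ite_eq']
  rw [this, Real.sqrt_one]

lemma key_pair {E : Type*} [NormedAddCommGroup E] [InnerProductSpace ℝ E]
    (v e : E) (he : ‖e‖ = 1) (hv : 1 ≤ ‖v‖) :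
    0 ≤ (‖v + e‖ - ‖v‖) + (‖v - e‖ - ‖v‖) ∧
      (‖v + e‖ - ‖v‖) + (‖v - e‖ - ‖v‖) ≤ 1 / ‖v‖ := by
  have hpar := parallelogram_law_with_norm ℝ v e
  set a := ‖v + e‖ with ha
  set b := ‖v - e‖ with hb
  set r := ‖v‖ with hr
  have ha0 : 0 ≤ a := norm_nonneg _
  have hb0 : 0 ≤ b := norm_nonneg _
  have hr0 : (0:ℝ) < r := lt_of_lt_of_le one_pos hv
  have hlow : 2 * r ≤ a + b := by
    have h1 : (v + e) + (v - e) = (2:ℝ) • v := by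
      rw [two_smul]; abel
    have h2 := norm_add_le (v + e) (v - e)
    rw [h1, norm_smul] at h2
    simpa using h2
  constructor
  · linarith
  · rw [he] at hpar
    have hub : r * (a + b) ≤ 2 * r ^ 2 + 1 := by
      nlinarith [sq_nonneg (a - b), sq_nonneg (r * (a + b) - 2 * r ^ 2 - 1),
        mul_pos hr0 hr0]
    rw [le_div_iff₀ hr0]
    nlinarith
theorem lattice_laplacian_of_distance (n : ℕ) (hn : 0 < n) :
    ∃ C : ℝ, 0 < C ∧
      ∀ x : Fin n → ℤ, 1 ≤ latticeNorm x →
        |(1 / (2 * (n : ℝ))) *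
            ∑ i : Fin n,
              ((latticeNorm (x + latticeBasis i) - latticeNorm x) +
                (latticeNorm (x - latticeBasis i) - latticeNorm x))| ≤ C / latticeNorm x := by
  refine ⟨1, one_pos, fun x hx => ?_⟩
  have hr0 : (0:ℝ) < latticeNorm x := lt_of_lt_of_le one_pos hx
  set r := latticeNorm x with hrdef
  have hterm : ∀ i : Fin n,
      0 ≤ (latticeNorm (x + latticeBasis i) - r) + (latticeNorm (x - latticeBasis i) - r) ∧
      (latticeNorm (x + latticeBasis i) - r) + (latticeNorm (x - latticeBasis i) - r) ≤ 1 / r := by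
    intro i
    have h := key_pair (toE x) (toE (latticeBasis i)) (norm_toE_basis i)
      (by rw [hrdef, latticeNorm_eq] at hx; exact hx)
    rw [← toE_add, ← toE_sub, ← latticeNorm_eq, ← latticeNorm_eq, ← latticeNorm_eq] at h
    exact h
  set S := ∑ i : Fin n,
      ((latticeNorm (x + latticeBasis i) - r) + (latticeNorm (x - latticeBasis i) - r)) with hS
  have hS0 : 0 ≤ S := Finset.sum_nonneg fun i _ => (hterm i).1
  have hSle : S ≤ n / r := by
    calc S ≤ ∑ _i : Fin n, (1 / r) := Finset.sum_le_sum fun i _ => (hterm i).2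
    _ = n / r := by simp [div_eq_mul_inv, mul_comm]
  have hn0 : (0:ℝ) < n := by exact_mod_cast hn
  have h2n : (0:ℝ) < 2 * n := by linarith
  rw [abs_of_nonneg (mul_nonneg (by positivity : (0:ℝ) ≤ 1 / (2 * (n:ℝ))) hS0)]
  rw [le_div_iff₀ hr0]
  calc 1 / (2 * (n:ℝ)) * S * r ≤ 1 / (2 * n) * (n / r) * r := by
        apply mul_le_mul_of_nonneg_right (mul_le_mul_of_nonneg_left hSle (by positivity)) hr0.le
    _ = 1 / 2 := by field_simp
    _ ≤ 1 := by norm_num
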